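/- Let f₁, …, fₙ : [0,∞) → ℝ be continuous and strictly positive, and for a continuous strictly positive function f define the geometric-mean functional G(f)(t) = exp((1/t)∫₀ᵗ ln f(u) du) for t > 0. Then for every t > 0, G(f₁ + ⋯ + fₙ)(t) ≥ G(f₁)(t) + ⋯ + G(fₙ)(t). -/

import Mathlib

open MeasureTheory intervalIntegral Real

lemma exp_avg_le (t : ℝ) (ht : 0 < t) (g : ℝ → ℝ)
    (hg : ContinuousOn g (Set.Icc 0 t)) :
    Real.exp ((1 / t) * ∫ u in (0:ℝ)..t, g u) ≤
      (1 / t) * ∫ u in (0:ℝ)..t, Real.exp (g u) := by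
  set μ := volume.restrict (Set.Ioc (0:ℝ) t) with hμ
  have hμuniv : μ Set.univ = ENNReal.ofReal t := by
    simp [hμ, Real.volume_Ioc]
  haveI : IsFiniteMeasure μ := ⟨by simp [hμuniv]⟩
  haveI : NeZero μ := ⟨by
    intro h
    rw [h] at hμuniv
    simp [ENNReal.ofReal_eq_zero] at hμuniv
    linarith⟩
  have hii : IntervalIntegrable g volume 0 t :=
    (hg.mono (by rw [Set.uIcc_of_le ht.le])).intervalIntegrable
  have hfi : Integrable g μ := by
    rw [hμ]
    exact (intervalIntegrable_iff_integrableOn_Ioc_of_le ht.le).mp hii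
  have hgc : ContinuousOn (Real.exp ∘ g) (Set.Icc 0 t) :=
    Real.continuous_exp.comp_continuousOn hg
  have hii2 : IntervalIntegrable (fun u => Real.exp (g u)) volume 0 t :=
    (hgc.mono (by rw [Set.uIcc_of_le ht.le])).intervalIntegrable
  have hgi : Integrable (fun u => Real.exp (g u)) μ := by
    rw [hμ]
    exact (intervalIntegrable_iff_integrableOn_Ioc_of_le ht.le).mp hii2
  have key := convexOn_exp.map_average_le Real.continuous_exp.continuousOn
    isClosed_univ (f := g) (μ := μ) (Filter.Eventually.of_forall fun _ => trivial) hfi hgi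
  have havg : ∀ (h : ℝ → ℝ), Integrable h μ →
      ⨍ x, h x ∂μ = (1 / t) * ∫ u in (0:ℝ)..t, h u := by
    intro h _
    rw [average_eq, measureReal_def, hμuniv, ENNReal.toReal_ofReal ht.le,
      intervalIntegral.integral_of_le ht.le]
    simp [hμ, smul_eq_mul, one_div]
  rw [havg g hfi, havg (fun u => Real.exp (g u)) hgi] at key
  exact key

theorem integral_geometric_mean_superadditive
    (n : ℕ) (f : Fin n → ℝ → ℝ)
    (hc : ∀ i, ContinuousOn (f i) (Set.Ici 0))
    (hpos : ∀ i, ∀ u ∈ Set.Ici (0 : ℝ), 0 < f i u) :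
    ∀ t > (0:ℝ),
      (∑ i, Real.exp ((1 / t) * ∫ u in (0:ℝ)..t, Real.log (f i u))) ≤
        Real.exp ((1 / t) * ∫ u in (0:ℝ)..t, Real.log (∑ i, f i u)) := by
  intro t ht
  rcases Nat.eq_zero_or_pos n with hn | hn
  · subst hn
    simp only [Finset.univ_eq_empty, Finset.sum_empty]
    exact (Real.exp_pos _).le
  set S : ℝ → ℝ := fun u => ∑ i, f i u with hS
  have hSc : ContinuousOn S (Set.Ici 0) := by
    apply continuousOn_finset_sum
    intro i _
    exact hc i
  have hSpos : ∀ u ∈ Set.Ici (0:ℝ), 0 < S u := by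
    intro u hu
    haveI : Nonempty (Fin n) := Fin.pos_iff_nonempty.mp hn
    exact Finset.sum_pos (fun i _ => hpos i u hu) Finset.univ_nonempty
  have hIcc : Set.Icc (0:ℝ) t ⊆ Set.Ici 0 := fun x hx => hx.1
  have hlogc : ∀ i, ContinuousOn (fun u => Real.log (f i u)) (Set.Icc 0 t) := by
    intro i
    exact ContinuousOn.log ((hc i).mono hIcc) (fun x hx => (hpos i x (hIcc hx)).ne')
  have hlogSc : ContinuousOn (fun u => Real.log (S u)) (Set.Icc 0 t) :=
    ContinuousOn.log (hSc.mono hIcc) (fun x hx => (hSpos x (hIcc hx)).ne')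
  have huIcc : Set.uIcc (0:ℝ) t = Set.Icc 0 t := Set.uIcc_of_le ht.le
  have hint : ∀ i, IntervalIntegrable (fun u => Real.log (f i u)) volume 0 t :=
    fun i => ((hlogc i).mono huIcc.subset).intervalIntegrable
  have hintS : IntervalIntegrable (fun u => Real.log (S u)) volume 0 t :=
    (hlogSc.mono huIcc.subset).intervalIntegrable
  have key : ∀ i : Fin n,
      Real.exp ((1 / t) * ∫ u in (0:ℝ)..t, (Real.log (f i u) - Real.log (S u))) ≤
        (1 / t) * ∫ u in (0:ℝ)..t, f i u / S u := by
    intro i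
    have h1 := exp_avg_le t ht (fun u => Real.log (f i u) - Real.log (S u))
      ((hlogc i).sub hlogSc)
    refine h1.trans_eq ?_
    congr 1
    apply intervalIntegral.integral_congr
    intro x hx
    rw [huIcc] at hx
    show Real.exp (Real.log (f i x) - Real.log (S x)) = f i x / S x
    rw [Real.exp_sub, Real.exp_log (hpos i x (hIcc hx)), Real.exp_log (hSpos x (hIcc hx))]
  have hsplit : ∀ i : Fin n,
      Real.exp ((1 / t) * ∫ u in (0:ℝ)..t, Real.log (f i u)) =
        Real.exp ((1 / t) * ∫ u in (0:ℝ)..t, Real.log (S u)) *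
        Real.exp ((1 / t) * ∫ u in (0:ℝ)..t, (Real.log (f i u) - Real.log (S u))) := by
    intro i
    rw [← Real.exp_add, intervalIntegral.integral_sub (hint i) hintS]
    ring_nf
  calc (∑ i, Real.exp ((1 / t) * ∫ u in (0:ℝ)..t, Real.log (f i u)))
      = Real.exp ((1 / t) * ∫ u in (0:ℝ)..t, Real.log (S u)) *
        ∑ i, Real.exp ((1 / t) * ∫ u in (0:ℝ)..t, (Real.log (f i u) - Real.log (S u))) := by
        rw [Finset.mul_sum]
        exact Finset.sum_congr rfl fun i _ => hsplit i
    _ ≤ Real.exp ((1 / t) * ∫ u in (0:ℝ)..t, Real.log (S u)) *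
        ∑ i, ((1 / t) * ∫ u in (0:ℝ)..t, f i u / S u) :=
        mul_le_mul_of_nonneg_left (Finset.sum_le_sum fun i _ => key i) (Real.exp_pos _).le
    _ = Real.exp ((1 / t) * ∫ u in (0:ℝ)..t, Real.log (S u)) := by
        have hdiv : ∀ i : Fin n, IntervalIntegrable (fun u => f i u / S u) volume 0 t := by
          intro i
          apply ContinuousOn.intervalIntegrable
          rw [huIcc]
          exact ((hc i).mono hIcc).div (hSc.mono hIcc) (fun x hx => (hSpos x (hIcc hx)).ne')
        have hone : ∑ i, ((1 / t) * ∫ u in (0:ℝ)..t, f i u / S u) = 1 := by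
          rw [← Finset.mul_sum,
            ← intervalIntegral.integral_finset_sum (fun i _ => hdiv i)]
          have heq : (∫ u in (0:ℝ)..t, ∑ i, f i u / S u) = ∫ u in (0:ℝ)..t, (1:ℝ) := by
            apply intervalIntegral.integral_congr
            intro x hx
            rw [huIcc] at hx
            show ∑ i, f i x / S x = 1
            rw [← Finset.sum_div, div_eq_one_iff_eq (hSpos x (hIcc hx)).ne']
          rw [heq]
          simp [ht.ne']
        rw [hone, mul_one]
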